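/- Let α be a complex number with |α| < 1 and let C : ℕ → ℂ be the normalized single-mode squeezed vacuum coefficients, C (2n) = (1 − |α|²)^(1/4) · α^n · √((2n-1)‼/(2n)‼) and C (2n+1) = 0. Then the mean particle number Σₙ n · |C n|² converges and equals |α|² / (1 − |α|²). -/

import Mathlib

open Finset

private noncomputable def srho : ℕ → ℝ
  | 0 => 1
  | (n+1) => srho n * (2*n+1) / (2*n+2)

private lemma srho_pos : ∀ n, 0 < srho n
  | 0 => one_pos
  | (n+1) => by
      have h := srho_pos n
      show 0 < srho n * (2*(n:ℝ)+1) / (2*n+2)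
      positivity

private lemma srho_le_one : ∀ n, srho n ≤ 1
  | 0 => le_refl 1
  | (n+1) => by
      have h := srho_le_one n
      have h2 := (srho_pos n).le
      show srho n * (2*(n:ℝ)+1) / (2*n+2) ≤ 1
      rw [div_le_one (by positivity)]
      nlinarith

private lemma srho_rec (n : ℕ) :
    (2*(n:ℝ)+2) * srho (n+1) = (2*n+1) * srho n := by
  show (2*(n:ℝ)+2) * (srho n * (2*n+1) / (2*n+2)) = _
  field_simp

private lemma srho_sym_sum (n : ℕ) :
    ∑ k ∈ range (n+1), (k:ℝ) * (srho k * srho (n-k)) =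
      (n:ℝ) * (∑ k ∈ range (n+1), srho k * srho (n-k)) / 2 := by
  have h := Finset.sum_range_reflect
    (fun k => (k:ℝ) * (srho k * srho (n-k))) (n+1)
  have h2 : ∑ j ∈ range (n+1), ((n:ℝ) - j) * (srho j * srho (n-j)) =
      ∑ j ∈ range (n+1), (j:ℝ) * (srho j * srho (n-j)) := by
    rw [← h]
    refine Finset.sum_congr rfl fun j hj => ?_
    have hj' : j ≤ n := Nat.lt_succ_iff.mp (Finset.mem_range.mp hj)
    have e1 : n + 1 - 1 - j = n - j := by omega
    have e2 : n - (n - j) = j := by omega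
    rw [e1, e2, Nat.cast_sub hj']
    ring
  have h3 : ∑ j ∈ range (n+1), ((n:ℝ) - j) * (srho j * srho (n-j)) =
      (n:ℝ) * (∑ k ∈ range (n+1), srho k * srho (n-k))
        - ∑ j ∈ range (n+1), (j:ℝ) * (srho j * srho (n-j)) := by
    rw [Finset.mul_sum, ← Finset.sum_sub_distrib]
    refine Finset.sum_congr rfl fun j _ => ?_
    ring
  linarith [h2, h3]

private lemma srho_conv : ∀ n : ℕ, ∑ k ∈ range (n+1), srho k * srho (n-k) = 1
  | 0 => by simp [srho]
  | (n+1) => by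
      have ih := srho_conv n
      have hL : ∑ k ∈ range (n+2), (k:ℝ) * (srho k * srho (n+1-k)) =
          ((n:ℝ)+1) * (∑ k ∈ range (n+2), srho k * srho (n+1-k)) / 2 := by
        have := srho_sym_sum (n+1)
        push_cast at this ⊢
        convert this using 2
      have hshift : ∑ k ∈ range (n+2), (k:ℝ) * (srho k * srho (n+1-k)) =
          ∑ k ∈ range (n+1), ((k:ℝ)+1) * (srho (k+1) * srho (n-k)) := by
        rw [Finset.sum_range_succ' (fun k => (k:ℝ) * (srho k * srho (n+1-k))) (n+1)]
        simp only [Nat.cast_zero, zero_mul, add_zero]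
        refine Finset.sum_congr rfl fun k _ => ?_
        have : n + 1 - (k+1) = n - k := by omega
        rw [this]
        push_cast
        ring
      have hterm : ∀ k : ℕ, ((k:ℝ)+1) * (srho (k+1) * srho (n-k)) =
          ((k:ℝ) + 1/2) * (srho k * srho (n-k)) := by
        intro k
        have h := srho_rec k
        have hne : (2*(k:ℝ)+2) ≠ 0 := by positivity
        have : srho (k+1) = (2*(k:ℝ)+1) * srho k / (2*k+2) := by
          field_simp
          linarith [h]
        rw [this]
        field_simp
      have hsum2 : ∑ k ∈ range (n+1), ((k:ℝ)+1/2) * (srho k * srho (n-k)) =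
          ((n:ℝ)+1) / 2 := by
        have expand : ∑ k ∈ range (n+1), ((k:ℝ)+1/2) * (srho k * srho (n-k)) =
            (∑ k ∈ range (n+1), (k:ℝ) * (srho k * srho (n-k)))
            + (1/2) * ∑ k ∈ range (n+1), srho k * srho (n-k) := by
          rw [Finset.mul_sum, ← Finset.sum_add_distrib]
          refine Finset.sum_congr rfl fun k _ => ?_
          ring
        rw [expand, srho_sym_sum n, ih]
        ring
      have : ((n:ℝ)+1) * (∑ k ∈ range (n+2), srho k * srho (n+1-k)) / 2
          = ((n:ℝ)+1)/2 := by
        rw [← hL, hshift]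
        rw [Finset.sum_congr rfl fun k _ => hterm k]
        exact hsum2
      have hpos : ((n:ℝ)+1) ≠ 0 := by positivity
      have h2 : ((n:ℝ)+1) * (∑ k ∈ range (n+2), srho k * srho (n+1-k)) =
          ((n:ℝ)+1) * 1 := by
        rw [mul_one]; linarith [this]
      exact mul_left_cancel₀ hpos h2

private lemma srho_key {t : ℝ} (ht0 : 0 ≤ t) (ht1 : t < 1) :
    HasSum (fun n : ℕ => Real.sqrt (1-t) * ((2*(n:ℝ)) * (srho n * t^n)))
      (t / (1-t)) := by
  have h1t : (0:ℝ) < 1 - t := by linarith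
  set u : ℕ → ℝ := fun n => srho n * t^n with hu_def
  have hu_nonneg : ∀ n, 0 ≤ u n := fun n => mul_nonneg (srho_pos n).le (pow_nonneg ht0 n)
  have hu_le : ∀ n, u n ≤ t^n := fun n =>
    mul_le_of_le_one_left (pow_nonneg ht0 n) (srho_le_one n)
  have hu : Summable u :=
    Summable.of_nonneg_of_le hu_nonneg hu_le (summable_geometric_of_lt_one ht0 ht1)
  set S : ℝ := ∑' n, u n with hS_def
  have hS0 : 0 ≤ S := tsum_nonneg hu_nonneg
  have hnorm : Summable fun n => ‖u n‖ := by simpa [Real.norm_eq_abs] using hu.abs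
  have hcauchy : HasSum (fun n => ∑ k ∈ Finset.range (n+1), u k * u (n-k)) (S * S) :=
    hasSum_sum_range_mul_of_summable_norm hnorm hnorm
  have inner : ∀ n, ∑ k ∈ Finset.range (n+1), u k * u (n-k) = t^n := by
    intro n
    have hc : ∀ k ∈ Finset.range (n+1), u k * u (n-k) = (srho k * srho (n-k)) * t^n := by
      intro k hk
      have hk' : k ≤ n := Nat.lt_succ_iff.mp (Finset.mem_range.mp hk)
      have hpow : t^k * t^(n-k) = t^n := by
        rw [← pow_add]; congr 1; omega
      simp only [hu_def]
      calc srho k * t^k * (srho (n-k) * t^(n-k))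
          = (srho k * srho (n-k)) * (t^k * t^(n-k)) := by ring
        _ = (srho k * srho (n-k)) * t^n := by rw [hpow]
    rw [Finset.sum_congr rfl hc, ← Finset.sum_mul, srho_conv, one_mul]
  have hS2 : S * S = (1-t)⁻¹ := by
    refine HasSum.unique ?_ (hasSum_geometric_of_lt_one ht0 ht1)
    exact (funext inner : _) ▸ hcauchy
  have hS : S = (Real.sqrt (1-t))⁻¹ := by
    have h1 : S = Real.sqrt (S*S) := (Real.sqrt_mul_self hS0).symm
    rw [h1, hS2, ← Real.sqrt_inv]
  set v : ℕ → ℝ := fun n => (n:ℝ) * u n with hv_def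
  have hv : Summable v := by
    refine Summable.of_nonneg_of_le (fun n => mul_nonneg n.cast_nonneg (hu_nonneg n))
      (fun n => mul_le_mul_of_nonneg_left (hu_le n) n.cast_nonneg) ?_
    have := summable_pow_mul_geometric_of_norm_lt_one (R := ℝ) 1
      (r := t) (by rwa [Real.norm_of_nonneg ht0])
    simpa using this
  set T : ℝ := ∑' n, v n with hT_def
  have hrel : ∀ n : ℕ, ((n:ℝ)+1) * u (n+1) = t * v n + (t/2) * u n := by
    intro n
    have h := srho_rec n
    have hne : (2*(n:ℝ)+2) ≠ 0 := by positivity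
    have hs' : srho (n+1) = (2*(n:ℝ)+1) * srho n / (2*(n:ℝ)+2) := by
      field_simp; linarith [h]
    simp only [hu_def, hv_def, hs', pow_succ]
    field_simp
  have hT : T = t*T + (t/2)*S := by
    have h0 : T = ∑' n : ℕ, ((n:ℝ)+1) * u (n+1) := by
      rw [hT_def, Summable.tsum_eq_zero_add hv]
      simp only [hv_def, Nat.cast_zero, zero_mul, zero_add, Nat.cast_add, Nat.cast_one]
    refine h0.trans ?_
    calc ∑' n : ℕ, ((n:ℝ)+1) * u (n+1)
        = ∑' n : ℕ, (t * v n + (t/2) * u n) := tsum_congr hrel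
      _ = (∑' n : ℕ, t * v n) + ∑' n : ℕ, (t/2) * u n :=
          Summable.tsum_add (hv.mul_left t) (hu.mul_left (t/2))
      _ = t*T + (t/2)*S := by rw [tsum_mul_left, tsum_mul_left]
  have hTval : T = t * S / (2*(1-t)) := by
    have hx : T * (1-t) = t*S/2 := by linarith [hT]
    field_simp at hx ⊢
    linarith [hx]
  have final := (hv.hasSum).mul_left (2*Real.sqrt (1-t))
  have hval : 2*Real.sqrt (1-t) * T = t / (1-t) := by
    have hs1 : Real.sqrt (1-t) ≠ 0 := ne_of_gt (Real.sqrt_pos.mpr h1t)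
    have hsq : Real.sqrt (1-t) * Real.sqrt (1-t) = 1 - t := Real.mul_self_sqrt h1t.le
    rw [hTval, hS]
    field_simp
  rw [hval] at final
  have heq : (fun n : ℕ => Real.sqrt (1-t) * ((2*(n:ℝ)) * (srho n * t^n))) = fun i => 2 * Real.sqrt (1 - t) * v i := by
    funext n
    show Real.sqrt (1-t) * ((2*(n:ℝ)) * (srho n * t^n)) = 2*Real.sqrt (1-t) * ((n:ℝ) * (srho n * t^n))
    ring
  rw [heq]
  exact final

private lemma srho_eq : ∀ n : ℕ,
    srho n = (Nat.doubleFactorial (2*n-1) : ℝ) / (Nat.doubleFactorial (2*n) : ℝ)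
  | 0 => by simp [srho, Nat.doubleFactorial]
  | (n+1) => by
      have ih := srho_eq n
      have e1 : 2*(n+1)-1 = (2*n-1) + 2 ∨ n = 0 := by omega
      have hd1 : (Nat.doubleFactorial (2*(n+1)-1) : ℝ)
          = (2*(n:ℝ)+1) * Nat.doubleFactorial (2*n-1) := by
        rcases e1 with h | h
        · rw [h, Nat.doubleFactorial_add_two]
          push_cast
          have : ((2*n-1 : ℕ) : ℝ) + 2 = 2*(n:ℝ)+1 := by
            have : 1 ≤ 2*n := by omega
            push_cast [Nat.cast_sub this]
            ring
          rw [this]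
        · subst h; norm_num [Nat.doubleFactorial]
      have hd2 : (Nat.doubleFactorial (2*(n+1)) : ℝ)
          = (2*(n:ℝ)+2) * Nat.doubleFactorial (2*n) := by
        have : 2*(n+1) = (2*n) + 2 := by omega
        rw [this, Nat.doubleFactorial_add_two]
        push_cast; ring
      have hne : (Nat.doubleFactorial (2*n) : ℝ) ≠ 0 := by
        exact_mod_cast (Nat.doubleFactorial_pos (2*n)).ne'
      show srho n * (2*(n:ℝ)+1) / (2*n+2) = _
      rw [hd1, hd2, ih]
      have h2 : (2*(n:ℝ)+2) ≠ 0 := by positivity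
      field_simp

/-- Mean particle number of the normalized single-mode squeezed vacuum:
`Σₙ n |C n|² = |α|² / (1 - |α|²)`. -/
theorem squeezed_vacuum_mean_particle_number (α : ℂ) (hα : ‖α‖ < 1) (C : ℕ → ℂ)
    (hEven : ∀ n : ℕ, C (2 * n) =
      (((1 - ‖α‖ ^ 2) ^ ((1 : ℝ) / 4) : ℝ) : ℂ) * α ^ n *
        (Real.sqrt ((Nat.doubleFactorial (2 * n - 1) : ℝ) /
          (Nat.doubleFactorial (2 * n) : ℝ)) : ℂ))
    (hOdd : ∀ n : ℕ, C (2 * n + 1) = 0) :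
    HasSum (fun n : ℕ => (n : ℝ) * ‖C n‖ ^ 2)
      (‖α‖ ^ 2 / (1 - ‖α‖ ^ 2)) := by
  set a := ‖α‖ with ha
  have ha0 : 0 ≤ a := norm_nonneg α
  set t := a^2 with ht
  have ht0 : 0 ≤ t := sq_nonneg a
  have ht1 : t < 1 := by nlinarith
  have h1t : 0 ≤ 1 - t := by linarith
  have hinj : Function.Injective (fun n : ℕ => 2*n) := fun x y h => by
    simpa using h
  have hzero : ∀ m : ℕ, m ∉ Set.range (fun n : ℕ => 2*n) →
      (m : ℝ) * ‖C m‖ ^ 2 = 0 := by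
    intro m hm
    rcases Nat.even_or_odd m with he | ho
    · obtain ⟨r, hr⟩ := he
      exact absurd (Set.mem_range.mpr ⟨r, by omega⟩) hm
    · obtain ⟨k, hk⟩ := ho
      rw [hk, hOdd k]
      simp
  rw [← Function.Injective.hasSum_iff hinj hzero]
  have key := srho_key ht0 ht1
  have hpt : ∀ n : ℕ, (((2*n : ℕ) : ℝ)) * ‖C (2*n)‖ ^ 2 =
      Real.sqrt (1-t) * ((2*(n:ℝ)) * (srho n * t^n)) := by
    intro n
    rw [hEven n]
    rw [norm_mul, norm_mul, Complex.norm_real, Complex.norm_real, Real.norm_eq_abs, Real.norm_eq_abs, norm_pow]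
    have hr1 : (0:ℝ) ≤ (1 - a^2) ^ ((1:ℝ)/4) := Real.rpow_nonneg h1t _
    have hr2 : (0:ℝ) ≤ Real.sqrt ((Nat.doubleFactorial (2*n-1) : ℝ) /
        (Nat.doubleFactorial (2*n) : ℝ)) := Real.sqrt_nonneg _
    rw [abs_of_nonneg hr1, abs_of_nonneg hr2]
    have hsq1 : ((1 - t) ^ ((1:ℝ)/4))^2 = Real.sqrt (1-t) := by
      rw [Real.sqrt_eq_rpow, ← Real.rpow_natCast ((1-t) ^ ((1:ℝ)/4)) 2,
        ← Real.rpow_mul h1t]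
      norm_num
    have hsq2 : (Real.sqrt ((Nat.doubleFactorial (2*n-1) : ℝ) /
        (Nat.doubleFactorial (2*n) : ℝ)))^2 = srho n := by
      rw [Real.sq_sqrt (div_nonneg (Nat.cast_nonneg _) (Nat.cast_nonneg _)), srho_eq]
    have hsq3 : (‖α‖^n)^2 = t^n := by
      rw [← ha, ht, ← pow_mul, ← pow_mul, Nat.mul_comm]
    push_cast
    rw [mul_pow, mul_pow, hsq1, hsq2, hsq3]
    ring
  have : ((fun n : ℕ => (n : ℝ) * ‖C n‖ ^ 2) ∘ (fun n : ℕ => 2*n)) =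
      fun n : ℕ => Real.sqrt (1-t) * ((2*(n:ℝ)) * (srho n * t^n)) := by
    funext n
    exact hpt n
  rw [this]
  exact key
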